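/- Let G be a residually finite group and ψ ∈ F_n * G an equation over G. Then ψ has a solution in every finite quotient of G if and only if ψ has a solution in the profinite completion Ĝ. -/

import Mathlib

/-- The index type of all finite quotients of `G`: finite-index normal subgroups. -/
structure FinQuot (G : Type) [Group G] where
  K : Subgroup G
  [normal : K.Normal]
  [fi : K.FiniteIndex]

attribute [instance] FinQuot.normal FinQuot.fi

instance (G : Type) [Group G] (q : FinQuot G) : TopologicalSpace (G ⧸ q.K) := ⊥
instance (G : Type) [Group G] (q : FinQuot G) : DiscreteTopology (G ⧸ q.K) := ⟨rfl⟩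

instance (G : Type) [Group G] (q : FinQuot G) : IsTopologicalGroup (G ⧸ q.K) where
  continuous_mul := continuous_of_discreteTopology
  continuous_inv := continuous_of_discreteTopology

/-- The diagonal map from `G` into the product of all its finite quotients. -/
def diagEmbed (G : Type) [Group G] : G →* ∀ q : FinQuot G, G ⧸ q.K :=
  Pi.monoidHom fun q => QuotientGroup.mk' q.K

/-- The profinite completion of `G`: the closure of the diagonal image of `G` in the
product of all its finite quotients (each discrete, the product carrying the product
topology). -/
def ProfiniteCompletion (G : Type) [Group G] : Subgroup (∀ q : FinQuot G, G ⧸ q.K) :=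
  (diagEmbed G).range.topologicalClosure

/-- The canonical map `G → Ĝ`. -/
def toCompletion (G : Type) [Group G] : G →* ProfiniteCompletion G :=
  (diagEmbed G).codRestrict _ fun g =>
    Subgroup.le_topologicalClosure _ (MonoidHom.mem_range.mpr ⟨g, rfl⟩)

/-- Evaluating the coordinate `q` of the value of an equation. -/
theorem coord_eval (G : Type) [Group G] (n : ℕ)
    (ψ : Monoid.Coprod (FreeGroup (Fin n)) G)
    (x : Fin n → ∀ q : FinQuot G, G ⧸ q.K) (q : FinQuot G) :
    Monoid.Coprod.lift (FreeGroup.lift x) (diagEmbed G) ψ q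
      = Monoid.Coprod.lift (FreeGroup.lift (fun i => x i q))
          (QuotientGroup.mk' q.K) ψ := by
  have h : (Pi.evalMonoidHom (fun q : FinQuot G => G ⧸ q.K) q).comp
      (Monoid.Coprod.lift (FreeGroup.lift x) (diagEmbed G))
      = Monoid.Coprod.lift (FreeGroup.lift (fun i => x i q)) (QuotientGroup.mk' q.K) := by
    rw [Monoid.Coprod.comp_lift]
    congr 1
    exact FreeGroup.ext_hom _ _ fun i => by simp
  exact DFunLike.congr_fun h ψ

/-- Let `ψ ∈ F_n * G` be an equation over a residually finite group `G`.  Then `ψ` is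
solvable in every finite quotient of `G` if and only if `ψ` is solvable in the
profinite completion `Ĝ`. -/
theorem equation_solvable_in_finite_quotients_iff_solvable_in_completion
    (G : Type) [Group G]
    (hG : ∀ g : G, g ≠ 1 → ∃ (K : Subgroup G), K.Normal ∧ K.FiniteIndex ∧ g ∉ K)
    (n : ℕ) (ψ : Monoid.Coprod (FreeGroup (Fin n)) G) :
    (∀ (K : Subgroup G) [K.Normal] [K.FiniteIndex],
        ∃ φ : FreeGroup (Fin n) →* G,
          (QuotientGroup.mk' K).comp (Monoid.Coprod.lift φ (MonoidHom.id G)) ψ = 1) ↔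
      ∃ φ : FreeGroup (Fin n) →* ProfiniteCompletion G,
        Monoid.Coprod.lift φ (toCompletion G) ψ = 1 := by
  constructor
  · intro h
    -- compactness argument in the product of all finite quotients
    set P := ∀ q : FinQuot G, G ⧸ q.K with hP
    let S : Set (Fin n → P) := {x | ∀ i, x i ∈ ProfiniteCompletion G}
    let Z : FinQuot G → Set (Fin n → P) :=
      fun q => {x | Monoid.Coprod.lift (FreeGroup.lift x) (diagEmbed G) ψ q = 1}
    have hSc : IsClosed S := by
      have : S = ⋂ i, (fun x : Fin n → P => x i) ⁻¹'
          ((ProfiniteCompletion G : Set P)) := by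
        ext x; simp [S, Set.mem_iInter]
      rw [this]
      exact isClosed_iInter fun i =>
        ((diagEmbed G).range.isClosed_topologicalClosure).preimage (continuous_apply i)
    have hZc : ∀ q, IsClosed (Z q) := by
      intro q
      have : Z q = (fun x : Fin n → P => fun i => x i q) ⁻¹'
          {y : Fin n → G ⧸ q.K |
            Monoid.Coprod.lift (FreeGroup.lift y) (QuotientGroup.mk' q.K) ψ = 1} := by
        ext x
        simp only [Z, Set.mem_setOf_eq, Set.mem_preimage]
        rw [coord_eval G n ψ x q]
      rw [this]
      exact (isClosed_discrete _).preimage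
        (continuous_pi fun i => (continuous_apply q).comp (continuous_apply i))
    have hfin : ∀ u : Finset (FinQuot G), (S ∩ ⋂ q ∈ u, Z q).Nonempty := by
      intro u
      set N : Subgroup G := ⨅ q ∈ u, q.K with hNdef
      haveI hNn : N.Normal := by
        constructor
        intro a ha g
        simp only [hNdef, Subgroup.mem_iInf] at ha ⊢
        intro q hq
        exact q.normal.conj_mem a (ha q hq) g
      haveI hNf : N.FiniteIndex :=
        Subgroup.finiteIndex_iInf' _ fun q _ => q.fi
      obtain ⟨φ, hφ⟩ := h N
      refine ⟨fun i => diagEmbed G (φ (FreeGroup.of i)), fun i =>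
        Subgroup.le_topologicalClosure _ ⟨_, rfl⟩, ?_⟩
      rw [Set.mem_iInter₂]
      intro q hq
      show Monoid.Coprod.lift (FreeGroup.lift _) (diagEmbed G) ψ q = 1
      rw [coord_eval]
      have h1 : FreeGroup.lift (fun i => diagEmbed G (φ (FreeGroup.of i)) q)
          = (QuotientGroup.mk' q.K).comp φ :=
        FreeGroup.ext_hom _ _ fun i => by simp [diagEmbed]; rfl
      have h2 : Monoid.Coprod.lift ((QuotientGroup.mk' q.K).comp φ) (QuotientGroup.mk' q.K)
          = (QuotientGroup.mk' q.K).comp (Monoid.Coprod.lift φ (MonoidHom.id G)) := by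
        rw [Monoid.Coprod.comp_lift, MonoidHom.comp_id]
      rw [h1, h2]
      have hw : Monoid.Coprod.lift φ (MonoidHom.id G) ψ ∈ N :=
        (QuotientGroup.eq_one_iff _).mp hφ
      have hwq : Monoid.Coprod.lift φ (MonoidHom.id G) ψ ∈ q.K := by
        simp only [hNdef, Subgroup.mem_iInf] at hw
        exact hw q hq
      exact (QuotientGroup.eq_one_iff _).mpr hwq
    haveI : ∀ q : FinQuot G, Finite (G ⧸ q.K) := fun q =>
      q.K.finite_quotient_of_finiteIndex
    obtain ⟨x, hxS, hxZ⟩ := hSc.isCompact.inter_iInter_nonempty Z hZc hfin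
    rw [Set.mem_iInter] at hxZ
    refine ⟨FreeGroup.lift fun i => (⟨x i, hxS i⟩ : ProfiniteCompletion G), ?_⟩
    apply (ProfiniteCompletion G).subtype_injective
    have hc : (ProfiniteCompletion G).subtype.comp
        (Monoid.Coprod.lift (FreeGroup.lift fun i => (⟨x i, hxS i⟩ : ProfiniteCompletion G))
          (toCompletion G))
        = Monoid.Coprod.lift (FreeGroup.lift x) (diagEmbed G) := by
      rw [Monoid.Coprod.comp_lift]
      congr 1
      exact FreeGroup.ext_hom _ _ fun i => by simp
    have := DFunLike.congr_fun hc ψ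
    simp only [MonoidHom.comp_apply] at this
    rw [this, map_one]
    exact funext fun q => hxZ q
  · rintro ⟨φ, hφ⟩ K _ _
    let q : FinQuot G := { K := K }
    let p : ProfiniteCompletion G →* G ⧸ K :=
      (Pi.evalMonoidHom (fun q : FinQuot G => G ⧸ q.K) q).comp (ProfiniteCompletion G).subtype
    have hsurj := QuotientGroup.mk'_surjective K
    choose s hs using fun i => hsurj (p (φ (FreeGroup.of i)))
    refine ⟨FreeGroup.lift s, ?_⟩
    have key : (QuotientGroup.mk' K).comp
        (Monoid.Coprod.lift (FreeGroup.lift s) (MonoidHom.id G))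
        = p.comp (Monoid.Coprod.lift φ (toCompletion G)) := by
      rw [Monoid.Coprod.comp_lift, Monoid.Coprod.comp_lift, MonoidHom.comp_id]
      congr 1
      exact FreeGroup.ext_hom _ _ fun i => by
        simp only [MonoidHom.comp_apply, FreeGroup.lift_apply_of]
        exact hs i
    have := DFunLike.congr_fun key ψ
    simp only [MonoidHom.comp_apply] at this
    show (QuotientGroup.mk' K) (Monoid.Coprod.lift (FreeGroup.lift s) (MonoidHom.id G) ψ) = 1
    rw [this, hφ, map_one]
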